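/- Let $n \ge 3$, $I \subseteq (0,\infty)$ a bounded interval, $V \in H^1(I)$, and $\alpha, \beta \in I$ with $\beta \ge \alpha/3$. Then $\alpha^{n/2-1}|V(\alpha)| \le C\left( \left(\int_I s^{n-1}|V'(s)|^2 ds\right)^{1/2} + \beta^{n/2-1}|V(\beta)| \right)$ for a constant $C$ depending only on $n$. -/

import Mathlib

open MeasureTheory Set

lemma aux_cs (k : ℕ) (hk : 2 ≤ k) (m M : ℝ) (hm : 0 < m) (hmM : m ≤ M) (V' : ℝ → ℝ)
    (hmeas : AEStronglyMeasurable V' (volume.restrict (Ioc m M)))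
    (hint : IntegrableOn (fun s => s ^ k * V' s ^ 2) (Ioc m M)) :
    IntegrableOn V' (Ioc m M) ∧
      ∫ x in Ioc m M, |V' x| ≤
        (∫ x in Ioc m M, x ^ k * V' x ^ 2) ^ (1/2 : ℝ) * (m ^ (1 - (k:ℝ))) ^ (1/2 : ℝ) := by
  have hpos : ∀ x ∈ Ioc m M, (0:ℝ) < x := fun x hx => hm.trans hx.1
  set p : ℝ := (k:ℝ)/2 with hp
  -- continuity of rpow on the positive interval
  have hcont : ∀ q : ℝ, ContinuousOn (fun x : ℝ => x ^ q) (Icc m M) := fun q x hx =>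
    (Real.continuousAt_rpow_const x q (Or.inl (hm.trans_le hx.1).ne')).continuousWithinAt
  -- integrability of x ^ (-(k:ℝ)) on Ioc m M
  have hgk : IntegrableOn (fun x : ℝ => x ^ (-(k:ℝ))) (Ioc m M) :=
    ((hcont _).integrableOn_compact isCompact_Icc).mono_set Ioc_subset_Icc_self
  -- pointwise rpow facts
  have hrw : ∀ x ∈ Ioc m M, x ^ (-(k:ℝ)) = (x ^ k)⁻¹ := by
    intro x hx
    rw [Real.rpow_neg (hpos x hx).le, Real.rpow_natCast]
  -- integrability of V'
  have hV'int : IntegrableOn V' (Ioc m M) := by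
    refine Integrable.mono' (((hint.add hgk).div_const 2)) hmeas ?_
    refine ae_restrict_of_forall_mem measurableSet_Ioc (fun x hx => ?_)
    have ht : (0:ℝ) < x ^ k := pow_pos (hpos x hx) k
    simp only [Pi.add_apply]
    rw [Real.norm_eq_abs, hrw x hx]
    have h1 : x ^ k * (x ^ k)⁻¹ = 1 := mul_inv_cancel₀ ht.ne'
    have h2 : V' x ^ 2 = |V' x| ^ 2 := (sq_abs _).symm
    have key := mul_nonneg (inv_pos.mpr ht).le (sq_nonneg (x ^ k * |V' x| - 1))
    have expand : (x ^ k)⁻¹ * (x ^ k * |V' x| - 1) ^ 2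
        = x ^ k * V' x ^ 2 - 2 * |V' x| + (x ^ k)⁻¹ := by
      field_simp
      rw [← sq_abs (V' x)]
      ring
    rw [expand] at key
    linarith [key]
  refine ⟨hV'int, ?_⟩
  set μ := volume.restrict (Ioc m M) with hμ
  set f : ℝ → ℝ := fun x => x ^ p * V' x with hf
  set g : ℝ → ℝ := fun x => x ^ (-p) with hg
  have hqm : ∀ q : ℝ, AEStronglyMeasurable (fun x : ℝ => x ^ q) μ := fun q =>
    (((hcont q).mono Ioc_subset_Icc_self).aestronglyMeasurable measurableSet_Ioc)
  have hfm : AEStronglyMeasurable f μ := (hqm p).mul hmeas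
  have hgm : AEStronglyMeasurable g μ := hqm (-p)
  have hae : ∀ᵐ x ∂μ, x ∈ Ioc m M := ae_restrict_mem measurableSet_Ioc
  have hp2 : p * (2:ℝ) = (k:ℝ) := by rw [hp]; ring
  have hsq : ∀ x ∈ Ioc m M, (x ^ p) ^ (2:ℕ) = x ^ (k:ℕ) := by
    intro x hx
    rw [← Real.rpow_natCast (x ^ p) 2, ← Real.rpow_mul (hpos x hx).le]
    push_cast
    rw [hp2, Real.rpow_natCast]
  have hsqg : ∀ x ∈ Ioc m M, (x ^ (-p)) ^ (2:ℕ) = x ^ (-(k:ℝ)) := by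
    intro x hx
    rw [← Real.rpow_natCast (x ^ (-p)) 2, ← Real.rpow_mul (hpos x hx).le]
    push_cast
    rw [show -p * (2:ℝ) = -(k:ℝ) by rw [hp]; ring]
  have hf2 : Integrable (fun x => f x ^ 2) μ := by
    refine hint.congr ?_
    filter_upwards [hae] with x hx
    rw [hf]
    simp only
    rw [mul_pow, hsq x hx]
  have hg2 : Integrable (fun x => g x ^ 2) μ := by
    refine hgk.congr ?_
    filter_upwards [hae] with x hx
    rw [hg]
    simp only
    rw [hsqg x hx]
  have hMf : MemLp f (ENNReal.ofReal 2) μ := by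
    rw [show (ENNReal.ofReal 2) = 2 by norm_num]
    exact (memLp_two_iff_integrable_sq hfm).mpr hf2
  have hMg : MemLp g (ENNReal.ofReal 2) μ := by
    rw [show (ENNReal.ofReal 2) = 2 by norm_num]
    exact (memLp_two_iff_integrable_sq hgm).mpr hg2
  have hCS := integral_mul_norm_le_Lp_mul_Lq (μ := μ) (p := 2) (q := 2) ⟨by norm_num, by norm_num, by norm_num⟩ hMf hMg
  have hL : ∫ x, ‖f x‖ * ‖g x‖ ∂μ = ∫ x in Ioc m M, |V' x| := by
    refine integral_congr_ae ?_
    filter_upwards [hae] with x hx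
    have hx0 := hpos x hx
    rw [hf, hg]
    simp only [Real.norm_eq_abs, abs_mul,
      abs_of_pos (Real.rpow_pos_of_pos hx0 p), abs_of_pos (Real.rpow_pos_of_pos hx0 (-p))]
    rw [mul_comm (x ^ p) |V' x|, mul_assoc, ← Real.rpow_add hx0]
    simp
  have hA : ∫ x, ‖f x‖ ^ (2:ℝ) ∂μ = ∫ x in Ioc m M, x ^ k * V' x ^ 2 := by
    refine integral_congr_ae ?_
    filter_upwards [hae] with x hx
    rw [show (2:ℝ) = ((2:ℕ):ℝ) by norm_num, Real.rpow_natCast, Real.norm_eq_abs, sq_abs, hf]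
    simp only
    rw [mul_pow, hsq x hx]
  have hB : ∫ x, ‖g x‖ ^ (2:ℝ) ∂μ = ∫ x in Ioc m M, x ^ (-(k:ℝ)) := by
    refine integral_congr_ae ?_
    filter_upwards [hae] with x hx
    rw [show (2:ℝ) = ((2:ℕ):ℝ) by norm_num, Real.rpow_natCast, Real.norm_eq_abs, sq_abs, hg]
    simp only
    rw [hsqg x hx]
  rw [hL, hA, hB] at hCS
  have hBnn : 0 ≤ ∫ x in Ioc m M, x ^ (-(k:ℝ)) :=
    setIntegral_nonneg measurableSet_Ioc fun x hx => Real.rpow_nonneg (hpos x hx).le _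
  have hAnn : 0 ≤ ∫ x in Ioc m M, x ^ k * V' x ^ 2 :=
    setIntegral_nonneg measurableSet_Ioc fun x hx =>
      mul_nonneg (pow_nonneg (hpos x hx).le _) (sq_nonneg _)
  have hBle : ∫ x in Ioc m M, x ^ (-(k:ℝ)) ≤ m ^ (1 - (k:ℝ)) := by
    rw [← intervalIntegral.integral_of_le hmM]
    have hk1 : -(k:ℝ) ≠ -1 := by
      intro h
      have : (k:ℝ) = 1 := by linarith
      have : k = 1 := by exact_mod_cast this
      omega
    have h0 : (0:ℝ) ∉ Set.uIcc m M := by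
      rw [Set.uIcc_of_le hmM]
      intro h
      exact absurd h.1 (by linarith)
    rw [integral_rpow (Or.inr ⟨hk1, h0⟩)]
    have hd : (1:ℝ) ≤ (k:ℝ) - 1 := by
      have : (2:ℝ) ≤ (k:ℝ) := by exact_mod_cast hk
      linarith
    have hMpos : 0 < M ^ (-(k:ℝ) + 1) := Real.rpow_pos_of_pos (hm.trans_le hmM) _
    have hmono : M ^ (-(k:ℝ) + 1) ≤ m ^ (-(k:ℝ) + 1) :=
      Real.rpow_le_rpow_of_nonpos hm hmM (by linarith)
    have he : (1:ℝ) - (k:ℝ) = -(k:ℝ) + 1 := by ring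
    rw [he]
    rw [div_eq_mul_inv, show (M ^ (-(k:ℝ)+1) - m ^ (-(k:ℝ)+1)) = -((m ^ (-(k:ℝ)+1) - M ^ (-(k:ℝ)+1))) by ring]
    rw [neg_mul, show (-(k:ℝ)+1)⁻¹ = -(((k:ℝ)-1)⁻¹) by rw [show (-(k:ℝ)+1) = -((k:ℝ)-1) by ring, inv_neg]]
    rw [mul_neg, neg_neg]
    have hnum : 0 ≤ m ^ (-(k:ℝ)+1) - M ^ (-(k:ℝ)+1) := by linarith
    calc (m ^ (-(k:ℝ)+1) - M ^ (-(k:ℝ)+1)) * ((k:ℝ)-1)⁻¹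
        ≤ (m ^ (-(k:ℝ)+1) - M ^ (-(k:ℝ)+1)) * 1 := by
          refine mul_le_mul_of_nonneg_left ?_ hnum
          rw [inv_le_one_iff₀]
          right; exact hd
      _ ≤ m ^ (-(k:ℝ)+1) := by rw [mul_one]; linarith
  calc ∫ x in Ioc m M, |V' x|
      ≤ (∫ x in Ioc m M, x ^ k * V' x ^ 2) ^ (1/2:ℝ) * (∫ x in Ioc m M, x ^ (-(k:ℝ))) ^ (1/2:ℝ) := hCS
    _ ≤ (∫ x in Ioc m M, x ^ k * V' x ^ 2) ^ (1/2:ℝ) * (m ^ (1 - (k:ℝ))) ^ (1/2:ℝ) := by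
        refine mul_le_mul_of_nonneg_left ?_ (Real.rpow_nonneg hAnn _)
        exact Real.rpow_le_rpow hBnn hBle (by norm_num)


/-- For `n ≥ 3`, `I = Ioo a b ⊆ (0,∞)` bounded, `V ∈ H¹(I)` (absolutely continuous
representative with derivative `V'`), and points `α, β ∈ I` with `β ≥ α/3`:
`α^{n/2-1}|V(α)| ≤ C ((∫_I s^{n-1}|V'|²)^{1/2} + β^{n/2-1}|V(β)|)` with `C = C(n)`. -/
theorem stmt_1 (n : ℕ) (hn : 3 ≤ n) :
    ∃ C > (0:ℝ), ∀ (a b : ℝ), 0 < a → a < b →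
      ∀ V V' : ℝ → ℝ,
        (∀ x ∈ Icc a b, HasDerivAt V (V' x) x) →
        IntegrableOn (fun s => s ^ (n - 1 : ℕ) * (V' s) ^ 2) (Ioo a b) →
        ∀ α ∈ Ioo a b, ∀ β ∈ Ioo a b, α / 3 ≤ β →
          α ^ ((n : ℝ) / 2 - 1) * |V α| ≤
            C * ((∫ x in Ioo a b, x ^ (n - 1 : ℕ) * (V' x) ^ 2) ^ (1/2 : ℝ)
              + β ^ ((n : ℝ) / 2 - 1) * |V β|) := by
  set c : ℝ := (n:ℝ)/2 - 1 with hcdef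
  have hc : 0 < c := by
    have : (3:ℝ) ≤ (n:ℝ) := by exact_mod_cast hn
    rw [hcdef]; linarith
  refine ⟨3 ^ c, Real.rpow_pos_of_pos (by norm_num) c, ?_⟩
  intro a b ha hab V V' hV hInt α hα β hβ hαβ
  set k : ℕ := n - 1 with hkdef
  have hk2 : 2 ≤ k := by omega
  have hkc : (k:ℝ) = (n:ℝ) - 1 := by
    rw [hkdef]; push_cast [Nat.cast_sub (by omega : 1 ≤ n)]; ring
  set m : ℝ := min α β with hmdef
  set M : ℝ := max α β with hMdef
  have ham : a < m := lt_min hα.1 hβ.1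
  have hMb : M < b := max_lt hα.2 hβ.2
  have hm0 : 0 < m := ha.trans ham
  have hmM : m ≤ M := min_le_max
  have hα0 : 0 < α := ha.trans hα.1
  have hα3 : 0 < α / 3 := by linarith
  have hα3m : α / 3 ≤ m := le_min (by linarith) hαβ
  have hsub : Ioc m M ⊆ Ioo a b := fun x hx => ⟨ham.trans hx.1, lt_of_le_of_lt hx.2 hMb⟩
  have hsubIcc : Icc m M ⊆ Icc a b := fun x hx => ⟨ham.le.trans hx.1, hx.2.trans hMb.le⟩
  -- measurability of V' on Ioc m M
  have hderiv_eq : ∀ x ∈ Ioc m M, deriv V x = V' x := fun x hx =>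
    (hV x (hsubIcc (Ioc_subset_Icc_self hx))).deriv
  have hmeas : AEStronglyMeasurable V' (volume.restrict (Ioc m M)) := by
    refine (measurable_deriv V).aestronglyMeasurable.congr ?_
    exact ae_restrict_of_forall_mem measurableSet_Ioc hderiv_eq
  have hint' : IntegrableOn (fun s => s ^ k * V' s ^ 2) (Ioc m M) := hInt.mono_set hsub
  obtain ⟨hV'int, hCS⟩ := aux_cs k hk2 m M hm0 hmM V' hmeas hint'
  -- FTC
  have huIcc : uIcc β α = Icc m M := by rw [Set.uIcc_comm]; rfl
  have huIoc : Set.uIoc β α = Ioc m M := by rw [Set.uIoc_comm]; rfl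
  have hFTC : ∫ y in β..α, V' y = V α - V β := by
    refine intervalIntegral.integral_eq_sub_of_hasDerivAt (fun x hx => hV x ?_) ?_
    · rw [huIcc] at hx; exact hsubIcc hx
    · rw [intervalIntegrable_iff, huIoc]; exact hV'int
  have habs : |V α| ≤ |V β| + ∫ x in Ioc m M, |V' x| := by
    have h1 : |V α - V β| ≤ ∫ x in Ioc m M, |V' x| := by
      rw [← hFTC]
      have := intervalIntegral.norm_integral_le_integral_norm_uIoc (f := V') (a := β) (b := α)
        (μ := volume)
      rw [huIoc] at this
      simpa [Real.norm_eq_abs] using this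
    calc |V α| = |V β + (V α - V β)| := by ring_nf
      _ ≤ |V β| + |V α - V β| := abs_add_le _ _
      _ ≤ |V β| + ∫ x in Ioc m M, |V' x| := by linarith
  -- notation
  set K : ℝ := ∫ x in Ioo a b, x ^ k * V' x ^ 2 with hKdef
  set A : ℝ := ∫ x in Ioc m M, x ^ k * V' x ^ 2 with hAdef
  have hAnn : 0 ≤ A :=
    setIntegral_nonneg measurableSet_Ioc fun x hx =>
      mul_nonneg (pow_nonneg (hm0.trans hx.1).le _) (sq_nonneg _)
  have hAK : A ≤ K := by
    refine setIntegral_mono_set hInt ?_ (HasSubset.Subset.eventuallyLE hsub)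
    refine ae_restrict_of_forall_mem measurableSet_Ioo fun x hx => ?_
    exact mul_nonneg (pow_nonneg (ha.trans hx.1).le _) (sq_nonneg _)
  have hKnn : 0 ≤ K := hAnn.trans hAK
  have hA12 : A ^ (1/2:ℝ) ≤ K ^ (1/2:ℝ) := Real.rpow_le_rpow hAnn hAK (by norm_num)
  -- exponent bookkeeping : 1 - k = -(2c)
  have hexp : 1 - (k:ℝ) = -(2*c) := by rw [hkc, hcdef]; ring
  -- m ^ (1-k) ≤ (α/3) ^ (1-k)
  have hm1k : m ^ (1 - (k:ℝ)) ≤ (α/3) ^ (1 - (k:ℝ)) :=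
    Real.rpow_le_rpow_of_nonpos hα3 hα3m (by rw [hexp]; linarith)
  have hm1knn : 0 ≤ m ^ (1 - (k:ℝ)) := Real.rpow_nonneg hm0.le _
  -- α^c * ((α/3)^(1-k))^(1/2) = 3^c
  have hkey : α ^ c * ((α/3) ^ (1 - (k:ℝ))) ^ (1/2:ℝ) = 3 ^ c := by
    rw [hexp, ← Real.rpow_mul hα3.le, show -(2*c) * (1/2:ℝ) = -c by ring,
      Real.rpow_neg hα3.le, ← div_eq_mul_inv, ← Real.div_rpow hα0.le hα3.le,
      show α / (α/3) = 3 by field_simp]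
  set S : ℝ := ∫ x in Ioc m M, |V' x| with hSdef
  set q : ℝ := (m ^ (1 - (k:ℝ))) ^ (1/2:ℝ) with hqdef
  have hαc : 0 ≤ α ^ c := Real.rpow_nonneg hα0.le c
  have hqnn : 0 ≤ q := Real.rpow_nonneg hm1knn _
  have t1 : α ^ c * |V α| ≤ α ^ c * |V β| + α ^ c * S := by
    have := mul_le_mul_of_nonneg_left habs hαc
    rw [mul_add] at this
    exact this
  have hβ0 : 0 < β := ha.trans hβ.1
  have t2 : α ^ c * |V β| ≤ 3 ^ c * (β ^ c * |V β|) := by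
    have h3β : α ^ c ≤ 3 ^ c * β ^ c := by
      rw [← Real.mul_rpow (by norm_num) hβ0.le]
      exact Real.rpow_le_rpow hα0.le (by linarith) hc.le
    calc α ^ c * |V β| ≤ (3 ^ c * β ^ c) * |V β| :=
          mul_le_mul_of_nonneg_right h3β (abs_nonneg _)
      _ = 3 ^ c * (β ^ c * |V β|) := by ring
  have t5 : α ^ c * q ≤ 3 ^ c := by
    have hq2 : q ≤ ((α/3) ^ (1 - (k:ℝ))) ^ (1/2:ℝ) :=
      Real.rpow_le_rpow hm1knn hm1k (by norm_num)
    calc α ^ c * q ≤ α ^ c * ((α/3) ^ (1 - (k:ℝ))) ^ (1/2:ℝ) :=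
          mul_le_mul_of_nonneg_left hq2 hαc
      _ = 3 ^ c := hkey
  have t3 : α ^ c * S ≤ K ^ (1/2:ℝ) * 3 ^ c := by
    calc α ^ c * S ≤ α ^ c * (A ^ (1/2:ℝ) * q) := mul_le_mul_of_nonneg_left hCS hαc
      _ = A ^ (1/2:ℝ) * (α ^ c * q) := by ring
      _ ≤ K ^ (1/2:ℝ) * 3 ^ c := by
          refine mul_le_mul hA12 t5 (mul_nonneg hαc hqnn) (Real.rpow_nonneg hKnn _)
  calc α ^ c * |V α| ≤ α ^ c * |V β| + α ^ c * S := t1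
    _ ≤ 3 ^ c * (β ^ c * |V β|) + K ^ (1/2:ℝ) * 3 ^ c := add_le_add t2 t3
    _ = 3 ^ c * (K ^ (1/2:ℝ) + β ^ c * |V β|) := by ring
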